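/- Let E be a real inner product space, let T ≥ 1 be a natural number, and let L : E → ℝ be a convex, differentiable function. Let θ* ∈ E, let Δ > 0 and σ > 0, and let θ_0, θ_1, …, θ_{T-1}, θ_T be points of E generated by the approximate gradient-descent update θ_{t+1} = θ_t − α·g_t for t = 0, …, T−1, where each g_t ∈ E satisfies ‖g_t‖ ≤ σ, the constant learning rate is α = Δ/(σ·√T), and ‖θ_t − θ*‖ ≤ Δ for all t = 0, …, T−1. Then min_{t=0,…,T−1} (L(θ_t) − L(θ*)) ≤ Δσ/√T + (Δ/T)·∑_{t=0}^{T−1} ‖∇L(θ_t) − g_t‖. -/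

import Mathlib

lemma aux_convex_grad_ineq {E : Type*} [NormedAddCommGroup E] [InnerProductSpace ℝ E]
    {L : E → ℝ} {gradL : E → E} (hconv : ConvexOn ℝ Set.univ L)
    (hgrad : ∀ x, HasFDerivAt L (innerSL ℝ (gradL x)) x) (x y : E) :
    (inner ℝ (gradL x) (y - x) : ℝ) ≤ L y - L x := by
  have hline : ∀ s : ℝ, HasDerivAt (fun s : ℝ => x + s • (y - x)) (y - x) s := by
    intro s
    simpa using ((hasDerivAt_id s).smul_const (y - x)).const_add x
  have hφ : HasDerivAt (fun s : ℝ => L (x + s • (y - x)))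
      ((inner ℝ (gradL x) (y - x) : ℝ)) 0 := by
    have h0 := (hgrad (x + (0:ℝ) • (y - x))).comp_hasDerivAt 0 (hline 0)
    simp at h0; exact h0
  have hφconv : ConvexOn ℝ Set.univ (fun s : ℝ => L (x + s • (y - x))) := by
    have := hconv.comp_affineMap (AffineMap.lineMap x y)
    have heq : (fun s : ℝ => L (x + s • (y - x))) = L ∘ (AffineMap.lineMap x y) := by
      funext s; simp [AffineMap.lineMap_apply, add_comm]
    rw [heq]
    simpa using this
  have := hφconv.le_slope_of_hasDerivAt (Set.mem_univ (0:ℝ)) (Set.mem_univ (1:ℝ)) one_pos hφ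
  simpa [slope_def_field] using this

theorem adversarial_coreset_convergence_convex_lipschitz
    {E : Type*} [NormedAddCommGroup E] [InnerProductSpace ℝ E]
    (T : ℕ) (hT : 1 ≤ T)
    (L : E → ℝ) (gradL : E → E)
    (hconv : ConvexOn ℝ Set.univ L)
    (hgrad : ∀ x, HasFDerivAt L (innerSL ℝ (gradL x)) x)
    (θstar : E) (Δ σ : ℝ) (hΔ : 0 < Δ) (hσ : 0 < σ)
    (θ g : ℕ → E)
    (hupd : ∀ t < T, θ (t + 1) = θ t - (Δ / (σ * Real.sqrt T)) • g t)
    (hg : ∀ t < T, ‖g t‖ ≤ σ)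
    (hθ : ∀ t < T, ‖θ t - θstar‖ ≤ Δ) :
    (Finset.range T).inf' (Finset.nonempty_range_iff.mpr (by omega))
        (fun t => L (θ t) - L θstar)
      ≤ Δ * σ / Real.sqrt T
        + (Δ / T) * ∑ t ∈ Finset.range T, ‖gradL (θ t) - g t‖ := by
  have hT0 : (0:ℝ) < T := by exact_mod_cast Nat.pos_of_ne_zero (by omega)
  have hsq : (0:ℝ) < Real.sqrt T := Real.sqrt_pos.mpr hT0
  have hsqsq : Real.sqrt T * Real.sqrt T = (T:ℝ) := Real.mul_self_sqrt hT0.le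
  set α : ℝ := Δ / (σ * Real.sqrt T) with hα
  have hαpos : 0 < α := by positivity
  set D : ℕ → ℝ := fun t => ‖θ t - θstar‖ ^ 2 with hD
  -- per-step norm identity
  have hkey : ∀ t < T, D (t + 1) =
      D t - 2 * α * inner ℝ (g t) (θ t - θstar) + α ^ 2 * ‖g t‖ ^ 2 := by
    intro t ht
    have h1 : θ (t + 1) - θstar = (θ t - θstar) - α • g t := by
      rw [hupd t ht]; abel
    have h2 : D (t + 1) = ‖(θ t - θstar) - α • g t‖ ^ 2 := by
      simp only [hD, h1]
    rw [h2, norm_sub_sq_real, real_inner_smul_right,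
      real_inner_comm (θ t - θstar) (g t), norm_smul, mul_pow, Real.norm_eq_abs,
      sq_abs]
    simp only [hD]
    ring
  -- per-step loss bound
  have hbound : ∀ t < T, L (θ t) - L θstar ≤
      (D t - D (t + 1)) / (2 * α) + α / 2 * σ ^ 2 + Δ * ‖gradL (θ t) - g t‖ := by
    intro t ht
    have h1 := aux_convex_grad_ineq hconv hgrad (θ t) θstar
    have h2 : L (θ t) - L θstar ≤ (inner ℝ (gradL (θ t)) (θ t - θstar) : ℝ) := by
      have : (inner ℝ (gradL (θ t)) (θstar - θ t) : ℝ)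
          = - inner ℝ (gradL (θ t)) (θ t - θstar) := by
        rw [← inner_neg_right]; congr 1; abel
      linarith [h1, this ▸ h1]
    have h3 : (inner ℝ (gradL (θ t)) (θ t - θstar) : ℝ)
        = inner ℝ (g t) (θ t - θstar) + inner ℝ (gradL (θ t) - g t) (θ t - θstar) := by
      rw [← inner_add_left]; congr 1; abel
    have h4 : (inner ℝ (gradL (θ t) - g t) (θ t - θstar) : ℝ)
        ≤ ‖gradL (θ t) - g t‖ * Δ := by
      calc (inner ℝ (gradL (θ t) - g t) (θ t - θstar) : ℝ)
          ≤ ‖gradL (θ t) - g t‖ * ‖θ t - θstar‖ := real_inner_le_norm _ _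
        _ ≤ ‖gradL (θ t) - g t‖ * Δ := by
            exact mul_le_mul_of_nonneg_left (hθ t ht) (norm_nonneg _)
    have h5 : (inner ℝ (g t) (θ t - θstar) : ℝ)
        = (D t - D (t + 1)) / (2 * α) + α / 2 * ‖g t‖ ^ 2 := by
      rw [hkey t ht]; field_simp; ring
    have h6 : ‖g t‖ ^ 2 ≤ σ ^ 2 := by
      have := hg t ht
      nlinarith [norm_nonneg (g t)]
    have h7 : α / 2 * ‖g t‖ ^ 2 ≤ α / 2 * σ ^ 2 :=
      mul_le_mul_of_nonneg_left h6 (by positivity)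
    nlinarith [h2, h3, h4, h5, h7]
  -- sum the bounds
  have hsum : ∑ t ∈ Finset.range T, (L (θ t) - L θstar)
      ≤ Δ * σ * Real.sqrt T + Δ * ∑ t ∈ Finset.range T, ‖gradL (θ t) - g t‖ := by
    have hsum1 : ∑ t ∈ Finset.range T, (L (θ t) - L θstar)
        ≤ ∑ t ∈ Finset.range T,
          ((D t - D (t + 1)) / (2 * α) + α / 2 * σ ^ 2 + Δ * ‖gradL (θ t) - g t‖) := by
      apply Finset.sum_le_sum
      intro t ht
      exact hbound t (Finset.mem_range.mp ht)
    have htel : ∑ t ∈ Finset.range T, (D t - D (t + 1)) = D 0 - D T :=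
      Finset.sum_range_sub' D T
    have hsum2 : ∑ t ∈ Finset.range T,
          ((D t - D (t + 1)) / (2 * α) + α / 2 * σ ^ 2 + Δ * ‖gradL (θ t) - g t‖)
        = (D 0 - D T) / (2 * α) + T * (α / 2 * σ ^ 2)
          + Δ * ∑ t ∈ Finset.range T, ‖gradL (θ t) - g t‖ := by
      rw [Finset.sum_add_distrib, Finset.sum_add_distrib, ← Finset.sum_div, htel,
        Finset.sum_const, Finset.mul_sum]
      simp [mul_comm]
    have hD0 : D 0 ≤ Δ ^ 2 := by
      have h := hθ 0 (by omega)
      simp only [hD]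
      nlinarith [norm_nonneg (θ 0 - θstar)]
    have hDT : 0 ≤ D T := by positivity
    have hmain : (D 0 - D T) / (2 * α) + T * (α / 2 * σ ^ 2) ≤ Δ * σ * Real.sqrt T := by
      have h8 : (D 0 - D T) / (2 * α) ≤ Δ ^ 2 / (2 * α) := by
        apply div_le_div_of_nonneg_right _ (by positivity)
        linarith
      have h9 : Δ ^ 2 / (2 * α) = Δ * σ * Real.sqrt T / 2 := by
        rw [hα]; field_simp
      have h10 : (T:ℝ) * (α / 2 * σ ^ 2) = Δ * σ * Real.sqrt T / 2 := by
        rw [hα]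
        field_simp
        linear_combination (-1 : ℝ) * hsqsq
      linarith
    calc ∑ t ∈ Finset.range T, (L (θ t) - L θstar)
        ≤ (D 0 - D T) / (2 * α) + T * (α / 2 * σ ^ 2)
          + Δ * ∑ t ∈ Finset.range T, ‖gradL (θ t) - g t‖ := by
          rw [← hsum2]; exact hsum1
      _ ≤ _ := by linarith
  -- from sum to min
  have hinf : (T:ℝ) * ((Finset.range T).inf' (Finset.nonempty_range_iff.mpr (by omega))
        (fun t => L (θ t) - L θstar))
      ≤ ∑ t ∈ Finset.range T, (L (θ t) - L θstar) := by
    have := Finset.card_nsmul_le_sum (Finset.range T)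
      (fun t => L (θ t) - L θstar)
      ((Finset.range T).inf' (Finset.nonempty_range_iff.mpr (by omega))
        (fun t => L (θ t) - L θstar))
      (fun t ht => Finset.inf'_le _ ht)
    simpa [nsmul_eq_mul] using this
  have hfin : Δ * σ / Real.sqrt T + (Δ / T) * ∑ t ∈ Finset.range T, ‖gradL (θ t) - g t‖
      = (Δ * σ * Real.sqrt T + Δ * ∑ t ∈ Finset.range T, ‖gradL (θ t) - g t‖) / T := by
    field_simp
    linear_combination (-σ) * hsqsq
  rw [hfin, le_div_iff₀ hT0, mul_comm]
  linarith
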